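/- Let R be a commutative noetherian local ring, and let M and N be finitely generated R-modules. If N belongs to the extension closure of M in mod R, then the first syzygy Ω N belongs to the extension closure of Ω M in mod R. -/

import Mathlib

open CategoryTheory

universe u

section Defs

variable (R : Type u) [CommRing R]

/-- `N` is a direct summand of `M`. -/
def IsSummand (N M : ModuleCat.{u} R) : Prop :=
  ∃ (s : N →ₗ[R] M) (r : M →ₗ[R] N), r ∘ₗ s = LinearMap.id

/-- The finite direct sum of a finite family of modules. -/
def finSum {n : ℕ} (f : Fin n → ModuleCat.{u} R) : ModuleCat.{u} R :=
  ModuleCat.of R (∀ i, f i)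

/-- The additive closure `add X` of a class `X` of modules: all direct summands of
finite direct sums of modules in `X`. -/
def addClosure (X : Set (ModuleCat.{u} R)) : Set (ModuleCat.{u} R) :=
  {M | ∃ (n : ℕ) (f : Fin n → ModuleCat.{u} R),
    (∀ i, f i ∈ X) ∧ IsSummand R M (finSum R f)}

/-- A class of modules is extension closed if it is closed under direct summands and
under extensions. -/
def IsExtClosed (S : Set (ModuleCat.{u} R)) : Prop :=
  (∀ M N : ModuleCat.{u} R, M ∈ S → IsSummand R N M → N ∈ S) ∧
  (∀ (A B C : ModuleCat.{u} R) (f : A →ₗ[R] B) (g : B →ₗ[R] C),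
    Function.Injective f → Function.Exact f g → Function.Surjective g →
    A ∈ S → C ∈ S → B ∈ S)

/-- The extension closure `ext X`: the smallest class containing `X` that is closed
under direct summands and extensions. -/
def extClosure (X : Set (ModuleCat.{u} R)) : Set (ModuleCat.{u} R) :=
  ⋂₀ {S | X ⊆ S ∧ IsExtClosed R S}

end Defs
/-- A finitely generated module over a noetherian local ring is maximal Cohen–Macaulay
if it admits a regular sequence in the maximal ideal of length the Krull dimension of `R`. -/
def IsMCM (R : Type u) [CommRing R] [IsLocalRing R]
    (M : Type u) [AddCommGroup M] [Module R M] : Prop :=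
  ∃ rs : List R, (∀ r ∈ rs, r ∈ IsLocalRing.maximalIdeal R) ∧
    RingTheory.Sequence.IsRegular M rs ∧ (rs.length : WithBot ℕ∞) = ringKrullDim R

/-- `M` is rigid: `Ext¹_R(M, M) = 0`. -/
def RigidModule (R : Type u) [CommRing R] (M : ModuleCat.{u} R) : Prop :=
  Subsingleton (((Ext R (ModuleCat.{u} R) 1).obj (Opposite.op M)).obj M)

/-- A noetherian local ring is Gorenstein if it has finite self-injective dimension,
i.e. `Ext^i(-, R)` vanishes for all sufficiently large `i`. -/
def IsGorensteinLocalRing (R : Type u) [CommRing R] [IsLocalRing R] : Prop :=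
  ∃ n : ℕ, ∀ i : ℕ, n < i → ∀ M : ModuleCat.{u} R,
    Subsingleton (((Ext R (ModuleCat.{u} R) i).obj (Opposite.op M)).obj (ModuleCat.of R R))

/-- `N` is (isomorphic to) the first syzygy `Ω M`: there is an exact sequence
`0 → N → F → M → 0` with `F` finite free and `N → F` landing in `m F` (minimality). -/
def IsSyzygyOf (R : Type u) [CommRing R] [IsLocalRing R] (N M : ModuleCat.{u} R) : Prop :=
  ∃ (F : ModuleCat.{u} R) (i : N →ₗ[R] F) (p : F →ₗ[R] M),
    Module.Free R F ∧ Module.Finite R F ∧ Function.Injective i ∧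
    Function.Exact i p ∧ Function.Surjective p ∧
    LinearMap.range i ≤ (IsLocalRing.maximalIdeal R) • (⊤ : Submodule R F)


section Helpers

variable {R : Type u} [CommRing R] [IsLocalRing R]

lemma pi_mem_smul_top {n : ℕ} (I : Ideal R) (a : Fin n → R) :
    a ∈ I • (⊤ : Submodule R (Fin n → R)) ↔ ∀ i, a i ∈ I := by
  constructor
  · intro h i
    refine Submodule.smul_induction_on (p := fun v => v i ∈ I) h ?_ ?_
    · intro r hr x _
      simpa using I.mul_mem_right _ hr
    · intro x y hx hy; exact I.add_mem hx hy
  · intro h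
    have : a = ∑ i, Pi.single i (a i) := by
      rw [Finset.univ_sum_single]
    rw [this]
    refine Submodule.sum_mem _ fun i _ => ?_
    have : Pi.single i (a i) = a i • (Pi.single i (1 : R) : Fin n → R) := by
      ext j
      by_cases hj : j = i <;> simp [Pi.single_apply, hj]
    rw [this]
    exact Submodule.smul_mem_smul (h i) trivial

/-- An endomorphism of a finite module congruent to the identity mod `m` is bijective. -/
lemma bijective_of_sub_id_mem {F : Type u} [AddCommGroup F] [Module R F]
    [IsNoetherianRing R] [Module.Finite R F] (f : F →ₗ[R] F)
    (h : ∀ x, f x - x ∈ (IsLocalRing.maximalIdeal R) • (⊤ : Submodule R F)) :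
    Function.Bijective f := by
  have hsurj : Function.Surjective f := by
    rw [← LinearMap.range_eq_top]
    have hle : (⊤ : Submodule R F) ≤ LinearMap.range f ⊔
        (IsLocalRing.maximalIdeal R) • (⊤ : Submodule R F) := by
      intro x _
      have : x = f x - (f x - x) := by abel
      rw [this]
      exact Submodule.sub_mem _ (Submodule.mem_sup_left ⟨x, rfl⟩)
        (Submodule.mem_sup_right (h x))
    have := Submodule.le_of_le_smul_of_le_jacobson_bot (Module.Finite.fg_top (R := R) (M := F))
      (IsLocalRing.maximalIdeal_le_jacobson ⊥) hle
    exact top_le_iff.mp this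
  exact ⟨IsNoetherian.injective_of_surjective_endomorphism f hsurj, hsurj⟩

lemma pi_single_eq_smul {n : ℕ} (t : Fin n) (c : R) :
    (Pi.single t c : Fin n → R) = c • (Pi.single t 1 : Fin n → R) := by
  ext j; by_cases hj : j = t <;> simp [Pi.single_apply, hj]

lemma sum_repr {L : Type u} [AddCommGroup L] [Module R L] {k : ℕ}
    (p : (Fin k → R) →ₗ[R] L) (w : Fin k → R) :
    p w = ∑ t, w t • p (Pi.single t 1) := by
  conv_lhs => rw [← Finset.univ_sum_single w]
  rw [map_sum]
  exact Finset.sum_congr rfl fun t _ => by rw [pi_single_eq_smul, map_smul]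

lemma reduce_gens {L : Type u} [AddCommGroup L] [Module R L] {k : ℕ}
    (p : (Fin (k+1) → R) →ₗ[R] L) (hp : Function.Surjective p)
    (a : Fin (k+1) → R) (ha : p a = 0) (i : Fin (k+1)) (hu : IsUnit (a i)) :
    ∃ q : (Fin k → R) →ₗ[R] L, Function.Surjective q := by
  classical
  set x : Fin (k+1) → L := fun t => p (Pi.single t 1) with hx
  set q : (Fin k → R) →ₗ[R] L :=
    Fintype.linearCombination R (fun j => x (i.succAbove j)) with hq
  have hne : ∀ t : Fin (k+1), t ≠ i → x t ∈ LinearMap.range q := by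
    intro t ht
    obtain ⟨j, hj⟩ := Fin.exists_succAbove_eq ht
    refine ⟨Pi.single j 1, ?_⟩
    rw [hq]
    simp only [Fintype.linearCombination_apply]
    rw [Finset.sum_eq_single j]
    · rw [hj]; simp
    · intro b _ hb; simp [Pi.single_apply, hb]
    · simp
  have hrange : ∀ t, x t ∈ LinearMap.range q := by
    intro t
    by_cases ht : t = i
    · subst ht
      have hsum : ∑ s, a s • x s = 0 := by rw [← sum_repr]; exact ha
      have hxi : a t • x t = -∑ s ∈ Finset.univ.erase t, a s • x s := by
        rw [eq_neg_iff_add_eq_zero,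
          Finset.add_sum_erase Finset.univ (fun s => a s • x s) (Finset.mem_univ t)]
        exact hsum
      have hmem : (∑ s ∈ Finset.univ.erase t, a s • x s) ∈ LinearMap.range q :=
        Submodule.sum_mem _ fun s hs =>
          Submodule.smul_mem _ _ (hne s (Finset.ne_of_mem_erase hs))
      have hxt : x t = (↑hu.unit⁻¹ : R) • (a t • x t) := by
        rw [smul_smul, IsUnit.val_inv_mul, one_smul]
      rw [hxt, hxi]
      exact Submodule.smul_mem _ _ (Submodule.neg_mem _ hmem)
    · exact hne t ht
  refine ⟨q, ?_⟩
  rw [← LinearMap.range_eq_top, eq_top_iff]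
  intro v _
  obtain ⟨w, rfl⟩ := hp v
  rw [sum_repr]
  exact Submodule.sum_mem _ fun t _ => Submodule.smul_mem _ _ (hrange t)

/-- Every finitely generated module over a local ring has a (minimal) syzygy. -/
lemma exists_isSyzygyOf (L : ModuleCat.{u} R) (hL : Module.Finite R L) :
    ∃ Z : ModuleCat.{u} R, IsSyzygyOf R Z L := by
  classical
  have hex : ∃ n : ℕ, ∃ p : (Fin n → R) →ₗ[R] L, Function.Surjective p := by
    obtain ⟨n, f, hf⟩ := Module.Finite.exists_fin' R L
    exact ⟨n, f, hf⟩
  obtain ⟨p, hp⟩ := Nat.find_spec hex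
  have hker : LinearMap.ker p ≤
      (IsLocalRing.maximalIdeal R) • (⊤ : Submodule R (Fin (Nat.find hex) → R)) := by
    by_contra hcon
    rw [SetLike.not_le_iff_exists] at hcon
    obtain ⟨a, ha, hna⟩ := hcon
    rw [pi_mem_smul_top] at hna
    push_neg at hna
    obtain ⟨i, hi⟩ := hna
    have hu : IsUnit (a i) := IsLocalRing.notMem_maximalIdeal.mp hi
    obtain ⟨k, hk⟩ : ∃ k, Nat.find hex = k + 1 :=
      Nat.exists_eq_succ_of_ne_zero i.pos.ne'
    set e : (Fin (k+1) → R) ≃ₗ[R] (Fin (Nat.find hex) → R) :=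
      LinearEquiv.funCongrLeft R R (finCongr hk) with he
    have hea : ∀ w : Fin (k+1) → R, e w = w ∘ Fin.cast hk := fun _ => rfl
    set p' : (Fin (k+1) → R) →ₗ[R] L := p ∘ₗ e.toLinearMap with hp'
    have hp's : Function.Surjective p' := by
      intro v; obtain ⟨w, hw⟩ := hp v
      exact ⟨e.symm w, by simp [hp', hw]⟩
    set a' : Fin (k+1) → R := a ∘ Fin.cast hk.symm with ha'
    have hpa' : p' a' = 0 := by
      have hh : e a' = a := by funext j; simp [hea, ha']
      simp only [hp', LinearMap.comp_apply, LinearEquiv.coe_coe, hh]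
      simpa using ha
    set i' : Fin (k+1) := Fin.cast hk i with hi'
    have hu' : IsUnit (a' i') := by simpa [ha', hi'] using hu
    obtain ⟨q, hq⟩ := reduce_gens p' hp's a' hpa' i' hu'
    have hlt : k < Nat.find hex := by omega
    exact Nat.find_min hex hlt ⟨q, hq⟩
  refine ⟨ModuleCat.of R (LinearMap.ker p), ModuleCat.of R (Fin (Nat.find hex) → R),
    (LinearMap.ker p).subtype, p, ?_, ?_, Submodule.injective_subtype _, ?_, hp, ?_⟩
  · exact (inferInstance : Module.Free R (Fin (Nat.find hex) → R))
  · exact (inferInstance : Module.Finite R (Fin (Nat.find hex) → R))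
  · rw [LinearMap.exact_iff, Submodule.range_subtype]
  · rw [Submodule.range_subtype]; exact hker

/-- Master lemma: if `K` is a direct summand of `L`, `ΩK` is a *minimal* syzygy of `K`,
and `X` is the kernel of any free cover of `L`, then `ΩK` is a direct summand of `X`. -/
lemma syzygy_summand [IsNoetherianRing R] {K L ΩK X : ModuleCat.{u} R}
    (s : K →ₗ[R] L) (r : L →ₗ[R] K) (hrs : r ∘ₗ s = LinearMap.id)
    {FK : ModuleCat.{u} R} (iK : ΩK →ₗ[R] FK) (pK : FK →ₗ[R] K)
    (hFKfree : Module.Free R FK) (hFKfin : Module.Finite R FK)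
    (hiK : Function.Injective iK) (hexK : Function.Exact iK pK)
    (hpK : Function.Surjective pK)
    (hmin : LinearMap.range iK ≤ (IsLocalRing.maximalIdeal R) • (⊤ : Submodule R FK))
    {FL : ModuleCat.{u} R} (iL : X →ₗ[R] FL) (pL : FL →ₗ[R] L)
    (hFLfree : Module.Free R FL)
    (hiL : Function.Injective iL) (hexL : Function.Exact iL pL)
    (hpL : Function.Surjective pL) :
    IsSummand R ΩK X := by
  haveI : Module.Free R FK := hFKfree
  haveI : Module.Free R FL := hFLfree
  haveI : Module.Finite R FK := hFKfin
  have hkerK : LinearMap.ker pK = LinearMap.range iK := LinearMap.exact_iff.mp hexK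
  have hkerL : LinearMap.ker pL = LinearMap.range iL := LinearMap.exact_iff.mp hexL
  obtain ⟨σ, hσ⟩ := Module.projective_lifting_property pL (s ∘ₗ pK) hpL
  obtain ⟨φ, hφ⟩ := Module.projective_lifting_property pK (r ∘ₗ pL) hpK
  have hσ' : ∀ x, pL (σ x) = s (pK x) := fun x => LinearMap.congr_fun hσ x
  have hφ' : ∀ y, pK (φ y) = r (pL y) := fun y => LinearMap.congr_fun hφ y
  have hrs' : ∀ k, r (s k) = k := fun k => LinearMap.congr_fun hrs k
  set ψ : FK →ₗ[R] FK := φ ∘ₗ σ with hψdef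
  have hψp : ∀ x, pK (ψ x) = pK x := by
    intro x
    simp only [hψdef, LinearMap.comp_apply, hφ', hσ', hrs']
  have hψbij : Function.Bijective ψ := by
    refine bijective_of_sub_id_mem ψ fun x => ?_
    refine hmin (hkerK ▸ ?_)
    rw [LinearMap.mem_ker, map_sub, hψp, sub_self]
  set eK : ΩK ≃ₗ[R] LinearMap.range iK := LinearEquiv.ofInjective iK hiK with heK
  set eL : X ≃ₗ[R] LinearMap.range iL := LinearEquiv.ofInjective iL hiL with heL
  have hmemL : ∀ w : ΩK, σ (iK w) ∈ LinearMap.range iL := by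
    intro w
    rw [← hkerL, LinearMap.mem_ker, hσ', hexK.apply_apply_eq_zero, map_zero]
  have hmemK : ∀ z : X, φ (iL z) ∈ LinearMap.range iK := by
    intro z
    rw [← hkerK, LinearMap.mem_ker, hφ', hexL.apply_apply_eq_zero, map_zero]
  set u : ΩK →ₗ[R] X :=
    eL.symm.toLinearMap ∘ₗ LinearMap.codRestrict (LinearMap.range iL) (σ ∘ₗ iK) hmemL with hu
  set v : X →ₗ[R] ΩK :=
    eK.symm.toLinearMap ∘ₗ LinearMap.codRestrict (LinearMap.range iK) (φ ∘ₗ iL) hmemK with hv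
  have hiLu : ∀ w : ΩK, iL (u w) = σ (iK w) := by
    intro w
    rw [hu]
    exact LinearEquiv.ofInjective_symm_apply (f := iL) (h := hiL)
      (⟨σ (iK w), hmemL w⟩ : LinearMap.range iL)
  have hiKv : ∀ z : X, iK (v z) = φ (iL z) := by
    intro z
    rw [hv]
    exact LinearEquiv.ofInjective_symm_apply (f := iK) (h := hiK)
      (⟨φ (iL z), hmemK z⟩ : LinearMap.range iK)
  set θ : ΩK →ₗ[R] ΩK := v ∘ₗ u with hθ
  have hiKθ : ∀ w, iK (θ w) = ψ (iK w) := by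
    intro w
    rw [hθ, LinearMap.comp_apply, hiKv, hiLu]
    rfl
  have hθbij : Function.Bijective θ := by
    constructor
    · intro w w' hww
      apply hiK
      apply hψbij.injective
      rw [← hiKθ, ← hiKθ, hww]
    · intro w'
      obtain ⟨x, hxψ⟩ := hψbij.surjective (iK w')
      have hxker : x ∈ LinearMap.range iK := by
        rw [← hkerK, LinearMap.mem_ker, ← hψp, hxψ, hexK.apply_apply_eq_zero]
      obtain ⟨w, rfl⟩ := hxker
      refine ⟨w, hiK ?_⟩
      rw [hiKθ, hxψ]
  set θe := LinearEquiv.ofBijective θ hθbij with hθe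
  refine ⟨u, θe.symm.toLinearMap ∘ₗ v, ?_⟩
  ext w
  have hvw : v (u w) = θe w := rfl
  simp only [LinearMap.comp_apply, LinearEquiv.coe_coe, hvw, LinearEquiv.symm_apply_apply,
    LinearMap.id_apply]

lemma horseshoe {A B C ΩA ΩC : ModuleCat.{u} R}
    (f : A →ₗ[R] B) (g : B →ₗ[R] C)
    (hf : Function.Injective f) (hfg : Function.Exact f g) (hg : Function.Surjective g)
    {FA : ModuleCat.{u} R} (iA : ΩA →ₗ[R] FA) (pA : FA →ₗ[R] A)
    (hFAfree : Module.Free R FA) (hFAfin : Module.Finite R FA)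
    (hiA : Function.Injective iA) (hexA : Function.Exact iA pA)
    (hpA : Function.Surjective pA)
    {FC : ModuleCat.{u} R} (iC : ΩC →ₗ[R] FC) (pC : FC →ₗ[R] C)
    (hFCfree : Module.Free R FC) (hFCfin : Module.Finite R FC)
    (hiC : Function.Injective iC) (hexC : Function.Exact iC pC)
    (hpC : Function.Surjective pC) :
    ∃ (X F : ModuleCat.{u} R) (iX : X →ₗ[R] F) (P : F →ₗ[R] B)
      (j : ΩA →ₗ[R] X) (q : X →ₗ[R] ΩC),
      Module.Free R F ∧ Module.Finite R F ∧ Function.Injective iX ∧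
      Function.Exact iX P ∧ Function.Surjective P ∧
      Function.Injective j ∧ Function.Exact j q ∧ Function.Surjective q := by
  haveI : Module.Free R FA := hFAfree
  haveI : Module.Free R FC := hFCfree
  haveI : Module.Finite R FA := hFAfin
  haveI : Module.Finite R FC := hFCfin
  have hkerg : LinearMap.ker g = LinearMap.range f := LinearMap.exact_iff.mp hfg
  have hkerpA : LinearMap.ker pA = LinearMap.range iA := LinearMap.exact_iff.mp hexA
  have hkerpC : LinearMap.ker pC = LinearMap.range iC := LinearMap.exact_iff.mp hexC
  obtain ⟨lam, hlam⟩ := Module.projective_lifting_property g pC hg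
  have hlam' : ∀ y, g (lam y) = pC y := fun y => LinearMap.congr_fun hlam y
  set P : (FA × FC) →ₗ[R] B := LinearMap.coprod (f ∘ₗ pA) lam with hP
  have hPapp : ∀ z : FA × FC, P z = f (pA z.1) + lam z.2 := fun z => rfl
  have hPsurj : Function.Surjective P := by
    intro b
    obtain ⟨y, hy⟩ := hpC (g b)
    have hbl : b - lam y ∈ LinearMap.range f := by
      rw [← hkerg, LinearMap.mem_ker, map_sub, hlam', hy, sub_self]
    obtain ⟨a, ha⟩ := hbl
    obtain ⟨x, hx⟩ := hpA a
    exact ⟨(x, y), by rw [hPapp, hx, ha]; abel⟩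
  have hjmem : ∀ w : ΩA, ((iA w, 0) : FA × FC) ∈ LinearMap.ker P := by
    intro w
    rw [LinearMap.mem_ker, hPapp]
    simp [hexA.apply_apply_eq_zero]
  set j : ΩA →ₗ[R] (LinearMap.ker P) :=
    LinearMap.codRestrict (LinearMap.ker P) ((LinearMap.inl R FA FC) ∘ₗ iA) hjmem with hj
  have hjinj : Function.Injective j := by
    intro w w' hww
    have : ((iA w, 0) : FA × FC) = (iA w', 0) := congrArg Subtype.val hww
    exact hiA (congrArg Prod.fst this)
  have hqmem : ∀ z : LinearMap.ker P, (z : FA × FC).2 ∈ LinearMap.range iC := by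
    intro z
    rw [← hkerpC, LinearMap.mem_ker, ← hlam']
    have h1 : g (P (z : FA × FC)) = 0 := by rw [z.2]; simp
    rw [hPapp, map_add, hfg.apply_apply_eq_zero, zero_add] at h1
    exact h1
  set eC : ΩC ≃ₗ[R] LinearMap.range iC := LinearEquiv.ofInjective iC hiC with heC
  set q : (LinearMap.ker P) →ₗ[R] ΩC :=
    eC.symm.toLinearMap ∘ₗ LinearMap.codRestrict (LinearMap.range iC)
      ((LinearMap.snd R FA FC) ∘ₗ (LinearMap.ker P).subtype) hqmem with hq
  have hiCq : ∀ z : LinearMap.ker P, iC (q z) = (z : FA × FC).2 := by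
    intro z
    exact LinearEquiv.ofInjective_symm_apply (f := iC) (h := hiC)
      (⟨(z : FA × FC).2, hqmem z⟩ : LinearMap.range iC)
  have hqsurj : Function.Surjective q := by
    intro w
    have h0 : g (lam (iC w)) = 0 := by rw [hlam', hexC.apply_apply_eq_zero]
    have hmem : lam (iC w) ∈ LinearMap.range f := by rw [← hkerg]; exact h0
    obtain ⟨a, ha⟩ := hmem
    obtain ⟨x, hx⟩ := hpA a
    have hz : ((-x, iC w) : FA × FC) ∈ LinearMap.ker P := by
      rw [LinearMap.mem_ker, hPapp]
      simp only [map_neg, hx, ha]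
      abel
    refine ⟨⟨(-x, iC w), hz⟩, hiC ?_⟩
    rw [hiCq]
  have hexjq : Function.Exact j q := by
    rw [LinearMap.exact_iff]
    apply le_antisymm
    · rintro z hz
      rw [LinearMap.mem_ker] at hz
      have h2 : (z : FA × FC).2 = 0 := by rw [← hiCq, hz, map_zero]
      have h1 : pA (z : FA × FC).1 = 0 := by
        apply hf
        have hz2 := z.2
        rw [LinearMap.mem_ker, hPapp, h2, map_zero, add_zero] at hz2
        rw [hz2, map_zero]
      have hmem : (z : FA × FC).1 ∈ LinearMap.range iA := by rw [← hkerpA]; exact h1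
      obtain ⟨w, hw⟩ := hmem
      refine ⟨w, ?_⟩
      apply Subtype.ext
      show ((iA w, 0) : FA × FC) = (z : FA × FC)
      rw [hw, ← h2]
    · rintro z ⟨w, rfl⟩
      rw [LinearMap.mem_ker]
      apply hiC
      rw [hiCq, map_zero]
      rfl
  exact ⟨ModuleCat.of R (LinearMap.ker P), ModuleCat.of R (FA × FC),
    (LinearMap.ker P).subtype, P, j, q,
    inferInstanceAs (Module.Free R (FA × FC)),
    inferInstanceAs (Module.Finite R (FA × FC)), Submodule.injective_subtype _,
    by rw [LinearMap.exact_iff, Submodule.range_subtype], hPsurj, hjinj, hexjq, hqsurj⟩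

omit [IsLocalRing R] in
lemma subset_extClosure (X : Set (ModuleCat.{u} R)) : X ⊆ extClosure R X :=
  fun M hM => Set.mem_sInter.2 fun _ hS => hS.1 hM

omit [IsLocalRing R] in
lemma isExtClosed_extClosure (X : Set (ModuleCat.{u} R)) : IsExtClosed R (extClosure R X) := by
  constructor
  · intro M N hM hsum
    exact Set.mem_sInter.2 fun S hS => hS.2.1 M N (Set.mem_sInter.1 hM S hS) hsum
  · intro A B C f g hf hfg hg hA hC
    exact Set.mem_sInter.2 fun S hS =>
      hS.2.2 A B C f g hf hfg hg (Set.mem_sInter.1 hA S hS) (Set.mem_sInter.1 hC S hS)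

omit [IsLocalRing R] in
lemma finite_of_ses {A B C : ModuleCat.{u} R} (f : A →ₗ[R] B) (g : B →ₗ[R] C)
    (hfg : Function.Exact f g) (hg : Function.Surjective g)
    (hA : Module.Finite R A) (hC : Module.Finite R C) : Module.Finite R B := by
  have h1 : ((⊤ : Submodule R B).map g).FG := by
    rw [Submodule.map_top, LinearMap.range_eq_top.mpr hg]
    exact Module.Finite.fg_top (R := R) (M := C)
  have h2 : ((⊤ : Submodule R B) ⊓ LinearMap.ker g).FG := by
    rw [top_inf_eq, LinearMap.exact_iff.mp hfg, LinearMap.range_eq_map]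
    exact Submodule.FG.map f (Module.Finite.fg_top (R := R) (M := A))
  exact ⟨Submodule.fg_of_fg_map_of_fg_inf_ker g h1 h2⟩

end Helpers

/-- Lemma 2.12(1): over a noetherian local ring, if `N` belongs to the extension
closure of `M` in `mod R`, then the first syzygy `Ω N` belongs to the extension
closure of `Ω M`. -/
theorem syzygy_mem_extClosure {R : Type u} [CommRing R] [IsNoetherianRing R]
    [IsLocalRing R]
    (M N ΩM ΩN : ModuleCat.{u} R)
    (hMfin : Module.Finite R M) (hNfin : Module.Finite R N)
    (hΩM : IsSyzygyOf R ΩM M) (hΩN : IsSyzygyOf R ΩN N)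
    (h : N ∈ extClosure R {M}) :
    ΩN ∈ extClosure R {ΩM} := by
  classical
  set Cl := extClosure R {ΩM} with hCl
  have hClsub : ({ΩM} : Set (ModuleCat.{u} R)) ⊆ Cl := subset_extClosure {ΩM}
  have hClclosed : IsExtClosed R Cl := isExtClosed_extClosure {ΩM}
  set S : Set (ModuleCat.{u} R) :=
    {L | Module.Finite R L ∧ ∀ Z : ModuleCat.{u} R, IsSyzygyOf R Z L → Z ∈ Cl} with hSdef
  have hMS : ({M} : Set (ModuleCat.{u} R)) ⊆ S := by
    rintro L hL
    rw [Set.mem_singleton_iff] at hL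
    subst hL
    refine ⟨hMfin, fun Z hZ => ?_⟩
    obtain ⟨FZ, iZ, pZ, h1, h2, h3, h4, h5, h6⟩ := hZ
    obtain ⟨FM, iM, pM, g1, g2, g3, g4, g5, g6⟩ := hΩM
    refine hClclosed.1 ΩM Z (hClsub rfl) ?_
    exact syzygy_summand LinearMap.id LinearMap.id (LinearMap.id_comp _)
      iZ pZ h1 h2 h3 h4 h5 h6 iM pM g1 g3 g4 g5
  have hSclosed : IsExtClosed R S := by
    constructor
    · rintro L K ⟨hLfin, hLsyz⟩ ⟨s, r, hrs⟩
      have hrsur : Function.Surjective r := fun k => ⟨s k, LinearMap.congr_fun hrs k⟩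
      refine ⟨Module.Finite.of_surjective r hrsur, fun Z hZ => ?_⟩
      obtain ⟨W, hW⟩ := exists_isSyzygyOf L hLfin
      have hWCl : W ∈ Cl := hLsyz W hW
      obtain ⟨FZ, iZ, pZ, h1, h2, h3, h4, h5, h6⟩ := hZ
      obtain ⟨FW, iW, pW, g1, g2, g3, g4, g5, g6⟩ := hW
      refine hClclosed.1 W Z hWCl ?_
      exact syzygy_summand s r hrs iZ pZ h1 h2 h3 h4 h5 h6 iW pW g1 g3 g4 g5
    · rintro A B C f g hfinj hfg hgsur ⟨hAfin, hAsyz⟩ ⟨hCfin, hCsyz⟩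
      have hBfin : Module.Finite R B := finite_of_ses f g hfg hgsur hAfin hCfin
      refine ⟨hBfin, fun Z hZ => ?_⟩
      obtain ⟨ZA, hZA⟩ := exists_isSyzygyOf A hAfin
      obtain ⟨ZC, hZC⟩ := exists_isSyzygyOf C hCfin
      have hZACl : ZA ∈ Cl := hAsyz ZA hZA
      have hZCCl : ZC ∈ Cl := hCsyz ZC hZC
      obtain ⟨FA, iA, pA, a1, a2, a3, a4, a5, a6⟩ := hZA
      obtain ⟨FC, iC, pC, c1, c2, c3, c4, c5, c6⟩ := hZC
      obtain ⟨X, F, iX, P, j, q, hFfree, hFfin, hiX, hexX, hPsur, hjinj, hexjq, hqsur⟩ :=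
        horseshoe f g hfinj hfg hgsur iA pA a1 a2 a3 a4 a5 iC pC c1 c2 c3 c4 c5
      have hXCl : X ∈ Cl := hClclosed.2 ZA X ZC j q hjinj hexjq hqsur hZACl hZCCl
      obtain ⟨FZ, iZ, pZ, h1, h2, h3, h4, h5, h6⟩ := hZ
      refine hClclosed.1 X Z hXCl ?_
      exact syzygy_summand LinearMap.id LinearMap.id (LinearMap.id_comp _)
        iZ pZ h1 h2 h3 h4 h5 h6 iX P hFfree hiX hexX hPsur
  have hNS : N ∈ S := Set.mem_sInter.1 h S ⟨hMS, hSclosed⟩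
  exact hNS.2 ΩN hΩN
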